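/- Let n ≥ 2, θ > 0, and p ∈ Δ_n with p_i > 0 for all i. For every relatively open subset G of S_n, liminf_{γ→0+} γ log Π_{θ,γ,p}(G) ≥ −θ inf_{x∈G} Σ_{i=1}^n p_i log(p_i/x_i), where for x ∈ S_n we set x_n = 1 − Σ_{i=1}^{n-1} x_i and the infimum over the empty set is +∞ (a term p_i log(p_i/x_i) is +∞ when x_i = 0). -/

import Mathlib

open MeasureTheory Filter
open scoped ENNReal NNReal Classical

/-- The simplex `S_n = {x ∈ ℝ^{n-1} : x_i ≥ 0, ∑ x_i ≤ 1}`. -/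
def Sn (n : ℕ) : Set (Fin (n - 1) → ℝ) :=
  {x | (∀ i, 0 ≤ x i) ∧ ∑ i, x i ≤ 1}

/-- For `x ∈ ℝ^{n-1}`, the extended coordinates `(x_1, …, x_{n-1}, 1 - ∑ x_i)`
indexed by `Fin n`. -/
noncomputable def xext (n : ℕ) (x : Fin (n - 1) → ℝ) (i : Fin n) : ℝ :=
  if h : (i : ℕ) < n - 1 then x ⟨i, h⟩ else 1 - ∑ j, x j

/-- The Dirichlet distribution `Π_{θ,γ,p}` on `S_n`: the measure with density
`Γ(γ⁻¹θ)/∏ Γ(γ⁻¹θ pᵢ) · ∏ xᵢ^{γ⁻¹θ pᵢ - 1}` (with `x_n = 1 - ∑_{i<n} x_i`)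
with respect to Lebesgue measure on `ℝ^{n-1}`, supported on `S_n`. -/
noncomputable def dirichletS (n : ℕ) (θ γ : ℝ) (p : Fin n → ℝ) :
    Measure (Fin (n - 1) → ℝ) :=
  volume.withDensity ((Sn n).indicator fun x =>
    ENNReal.ofReal ((Real.Gamma (θ / γ) / ∏ i, Real.Gamma (θ * p i / γ)) *
      ∏ i, xext n x i ^ (θ * p i / γ - 1)))

/-- The cost `∑_{i=1}^n pᵢ log (pᵢ / xᵢ)` of a point `x ∈ S_n`, a summand being `+∞`
when `xᵢ = 0` (and `pᵢ > 0`). -/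
noncomputable def entCost (n : ℕ) (p : Fin n → ℝ) (x : Fin (n - 1) → ℝ) : EReal :=
  ∑ i, if xext n x i = 0 then (⊤ : EReal)
    else ((p i * Real.log (p i / xext n x i) : ℝ) : EReal)

/-! ### Elementary factorial and Gamma function bounds -/

lemma exp_le_one_add_div {m : ℝ} (hm : 0 < m) : Real.exp (1/(m+1)) ≤ (m+1)/m := by
  have h1 : (0:ℝ) < m + 1 := by linarith
  have h2 : m/(m+1) ≤ Real.exp (-(1/(m+1))) := by
    have := Real.add_one_le_exp (-(1/(m+1)))
    have h : 1 - 1/(m+1) ≤ Real.exp (-(1/(m+1))) := by linarith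
    calc m/(m+1) = 1 - 1/(m+1) := by field_simp; ring
    _ ≤ _ := h
  have h3 : (0:ℝ) < m/(m+1) := by positivity
  calc Real.exp (1/(m+1)) = (Real.exp (-(1/(m+1))))⁻¹ := by rw [← Real.exp_neg]; ring_nf
  _ ≤ (m/(m+1))⁻¹ := inv_anti₀ h3 h2
  _ = (m+1)/m := by field_simp

lemma pow_le_factorial_exp : ∀ n : ℕ, 1 ≤ n → (n:ℝ)^n ≤ n.factorial * Real.exp ((n:ℝ)-1) := by
  intro n
  induction n with
  | zero => intro h; omega
  | succ m ih =>
    intro _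
    rcases Nat.eq_zero_or_pos m with hm | hm
    · subst hm; simp
    have hmR : (0:ℝ) < m := by exact_mod_cast hm
    have key : ((m:ℝ)+1)^m ≤ (m:ℝ)^m * Real.exp 1 := by
      have h1 : ((m:ℝ)+1)^m = (m:ℝ)^m * ((1 + 1/m))^m := by
        rw [← mul_pow]; congr 1; field_simp
      have h2 : ((1:ℝ) + 1/m)^m ≤ (Real.exp (1/m))^m := by
        apply pow_le_pow_left₀ (by positivity)
        have := Real.add_one_le_exp (1/(m:ℝ)); linarith
      have h3 : (Real.exp (1/(m:ℝ)))^m = Real.exp 1 := by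
        rw [← Real.exp_nat_mul, mul_one_div, div_self (ne_of_gt hmR)]
      rw [h1]
      have := h2.trans_eq h3
      nlinarith [pow_pos hmR m]
    have ihm := ih hm
    have hfac : ((m+1).factorial : ℝ) = ((m:ℝ)+1) * m.factorial := by
      rw [Nat.factorial_succ]; push_cast; ring
    have hexp : Real.exp (((m:ℝ)+1)-1) = Real.exp ((m:ℝ)-1) * Real.exp 1 := by
      rw [← Real.exp_add]; ring_nf
    have e1 : ((m+1:ℕ):ℝ)^(m+1) = ((m:ℝ)+1) * ((m:ℝ)+1)^m := by push_cast; ring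
    have e2 : ((m:ℝ)+1) * ((m:ℝ)+1)^m ≤ ((m:ℝ)+1) * ((m:ℝ)^m * Real.exp 1) := by
      apply mul_le_mul_of_nonneg_left key (by positivity)
    have e3 : ((m:ℝ)+1) * ((m:ℝ)^m * Real.exp 1)
        ≤ ((m:ℝ)+1) * ((m.factorial * Real.exp ((m:ℝ)-1)) * Real.exp 1) := by
      have : (m:ℝ)^m * Real.exp 1 ≤ (m.factorial * Real.exp ((m:ℝ)-1)) * Real.exp 1 :=
        mul_le_mul_of_nonneg_right ihm (le_of_lt (Real.exp_pos 1))
      exact mul_le_mul_of_nonneg_left this (by positivity)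
    have e4 : ((m:ℝ)+1) * ((m.factorial * Real.exp ((m:ℝ)-1)) * Real.exp 1)
        = ((m+1).factorial : ℝ) * Real.exp (((m+1:ℕ):ℝ)-1) := by
      rw [hfac]; push_cast; rw [hexp]; ring
    rw [e1, ← e4]; exact e2.trans e3

lemma factorial_exp_le_pow :
    ∀ n : ℕ, 1 ≤ n → (n.factorial:ℝ) * Real.exp ((n:ℝ)-1) ≤ (n:ℝ)^(n+1) := by
  intro n
  induction n with
  | zero => intro h; omega
  | succ m ih =>
    intro _
    rcases Nat.eq_zero_or_pos m with hm | hm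
    · subst hm; simp
    have hmR : (0:ℝ) < m := by exact_mod_cast hm
    have key : (m:ℝ)^(m+1) * Real.exp 1 ≤ ((m:ℝ)+1)^(m+1) := by
      have h1 : ((m:ℝ)+1)^(m+1) = (m:ℝ)^(m+1) * (((m:ℝ)+1)/m)^(m+1) := by
        rw [← mul_pow]; congr 1; field_simp
      have h2 : Real.exp 1 = (Real.exp (1/((m:ℝ)+1)))^(m+1) := by
        rw [← Real.exp_nat_mul]
        congr 1
        push_cast
        field_simp
      have h3 : (Real.exp (1/((m:ℝ)+1)))^(m+1) ≤ (((m:ℝ)+1)/m)^(m+1) :=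
        pow_le_pow_left₀ (le_of_lt (Real.exp_pos _)) (exp_le_one_add_div hmR) _
      rw [h1]
      have h4 := h2.trans_le h3
      nlinarith [pow_pos hmR (m+1)]
    have ihm := ih hm
    have e0 : ((m+1).factorial:ℝ) * Real.exp (((m+1:ℕ):ℝ)-1)
        = ((m:ℝ)+1) * (((m.factorial:ℝ) * Real.exp ((m:ℝ)-1)) * Real.exp 1) := by
      rw [Nat.factorial_succ]; push_cast
      rw [show ((m:ℝ)+1)-1 = ((m:ℝ)-1) + 1 by ring, Real.exp_add]; ring
    have e1 : ((m:ℝ)+1) * (((m.factorial:ℝ) * Real.exp ((m:ℝ)-1)) * Real.exp 1)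
        ≤ ((m:ℝ)+1) * ((m:ℝ)^(m+1) * Real.exp 1) := by
      apply mul_le_mul_of_nonneg_left _ (by positivity)
      exact mul_le_mul_of_nonneg_right ihm (le_of_lt (Real.exp_pos 1))
    have e2 : ((m:ℝ)+1) * ((m:ℝ)^(m+1) * Real.exp 1) ≤ ((m:ℝ)+1) * ((m:ℝ)+1)^(m+1) :=
      mul_le_mul_of_nonneg_left key (by positivity)
    have e3 : ((m:ℝ)+1) * ((m:ℝ)+1)^(m+1) = ((m+1:ℕ):ℝ)^(m+1+1) := by push_cast; ring
    rw [e0, ← e3]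
    exact e1.trans e2

lemma log_Gamma_le {x : ℝ} (hx : 3 ≤ x) :
    Real.log (Real.Gamma x) ≤ x * Real.log x - x + Real.log x + 2 := by
  have hx0 : (0:ℝ) < x := by linarith
  have hlogx : 0 ≤ Real.log x := Real.log_nonneg (by linarith)
  set k := ⌊x⌋₊ with hk
  have hk3 : 3 ≤ k := Nat.le_floor (by exact_mod_cast hx)
  have hkx : (k:ℝ) ≤ x := Nat.floor_le hx0.le
  have hxk : x < (k:ℝ) + 1 := Nat.lt_floor_add_one x
  have hkpos : (0:ℝ) < k := by
    have : (3:ℝ) ≤ (k:ℝ) := by exact_mod_cast hk3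
    linarith
  have h1 : Real.Gamma x ≤ (k.factorial : ℝ) := by
    rw [← Real.Gamma_nat_eq_factorial]
    refine Real.Gamma_strictMonoOn_Ici.monotoneOn ?_ ?_ hxk.le
    · exact by simpa using (by linarith : (2:ℝ) ≤ x)
    · simp only [Set.mem_Ici]; linarith
  have h2 : Real.log (Real.Gamma x) ≤ Real.log (k.factorial : ℝ) :=
    Real.log_le_log (Real.Gamma_pos_of_pos hx0) h1
  have h3 : (k.factorial:ℝ) ≤ (k:ℝ)^(k+1) * Real.exp (1-(k:ℝ)) := by
    have := factorial_exp_le_pow k (by omega)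
    have hepos := Real.exp_pos ((k:ℝ)-1)
    rw [show (1-(k:ℝ)) = -((k:ℝ)-1) by ring, Real.exp_neg, ← div_eq_mul_inv,
      le_div_iff₀ hepos]
    linarith
  have h4 : Real.log (k.factorial:ℝ) ≤ ((k:ℝ)+1) * Real.log k + (1 - (k:ℝ)) := by
    have hfpos : (0:ℝ) < k.factorial := by exact_mod_cast k.factorial_pos
    calc Real.log (k.factorial:ℝ) ≤ Real.log ((k:ℝ)^(k+1) * Real.exp (1-(k:ℝ))) :=
          Real.log_le_log hfpos h3
    _ = ((k:ℝ)+1) * Real.log k + (1 - (k:ℝ)) := by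
        rw [Real.log_mul (by positivity) (by positivity), Real.log_pow, Real.log_exp]
        push_cast; ring
  have h5 : ((k:ℝ)+1) * Real.log k + (1 - (k:ℝ)) ≤ (x+1) * Real.log x + (1 - (x-1)) := by
    have hlk : Real.log (k:ℝ) ≤ Real.log x := Real.log_le_log hkpos hkx
    have hlk0 : 0 ≤ Real.log (k:ℝ) :=
      Real.log_nonneg (by exact_mod_cast Nat.one_le_iff_ne_zero.mpr (by omega))
    have : ((k:ℝ)+1) * Real.log k ≤ (x+1) * Real.log x := by
      calc ((k:ℝ)+1) * Real.log k ≤ ((k:ℝ)+1) * Real.log x := by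
            apply mul_le_mul_of_nonneg_left hlk (by linarith)
      _ ≤ (x+1) * Real.log x := by apply mul_le_mul_of_nonneg_right (by linarith) hlogx
    linarith
  calc Real.log (Real.Gamma x) ≤ ((k:ℝ)+1) * Real.log k + (1 - (k:ℝ)) := h2.trans h4
  _ ≤ (x+1) * Real.log x + (1 - (x-1)) := h5
  _ = x * Real.log x - x + Real.log x + 2 := by ring

lemma le_log_Gamma {x : ℝ} (hx : 3 ≤ x) :
    x * Real.log x - x - 2 * Real.log x - 2 ≤ Real.log (Real.Gamma x) := by
  have hx0 : (0:ℝ) < x := by linarith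
  have hlogx : 0 ≤ Real.log x := Real.log_nonneg (by linarith)
  set k := ⌊x⌋₊ with hk
  have hk3 : 3 ≤ k := Nat.le_floor (by exact_mod_cast hx)
  have hkx : (k:ℝ) ≤ x := Nat.floor_le hx0.le
  have hxk : x < (k:ℝ) + 1 := Nat.lt_floor_add_one x
  set j := k - 1 with hj
  have hj2 : 2 ≤ j := by omega
  have hjR : (j:ℝ) = (k:ℝ) - 1 := by
    have : (j:ℕ) + 1 = k := by omega
    have := congrArg (fun t : ℕ => (t:ℝ)) this
    push_cast at this; linarith
  have hk3R : (3:ℝ) ≤ (k:ℝ) := by exact_mod_cast hk3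
  have hjpos : (0:ℝ) < j := by rw [hjR]; linarith
  have h1 : (j.factorial:ℝ) ≤ Real.Gamma x := by
    rw [← Real.Gamma_nat_eq_factorial]
    refine Real.Gamma_strictMonoOn_Ici.monotoneOn ?_ ?_ ?_
    · simp only [Set.mem_Ici]; rw [hjR]; linarith
    · exact by simpa using (by linarith : (2:ℝ) ≤ x)
    · rw [hjR]; linarith
  have h2 : Real.log (j.factorial:ℝ) ≤ Real.log (Real.Gamma x) := by
    apply Real.log_le_log (by exact_mod_cast j.factorial_pos) h1
  have h3 : (j:ℝ) * Real.log j - ((j:ℝ) - 1) ≤ Real.log (j.factorial:ℝ) := by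
    have hpf := pow_le_factorial_exp j (by omega)
    have : Real.log ((j:ℝ)^j) ≤ Real.log ((j.factorial:ℝ) * Real.exp ((j:ℝ)-1)) :=
      Real.log_le_log (by positivity) hpf
    rw [Real.log_pow, Real.log_mul (by exact_mod_cast j.factorial_pos.ne') (Real.exp_ne_zero _),
      Real.log_exp] at this
    push_cast at this ⊢
    linarith
  have hjx2 : x - 2 ≤ (j:ℝ) := by rw [hjR]; linarith
  have hjx1 : (j:ℝ) ≤ x - 1 := by rw [hjR]; linarith
  have ha1 : (1:ℝ) ≤ x - 2 := by linarith
  have h4 : (x-2) * Real.log (x-2) - (x-2) ≤ (j:ℝ) * Real.log j - ((j:ℝ) - 1) := by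
    have hla : 0 ≤ Real.log (x-2) := Real.log_nonneg ha1
    have hlj : Real.log (x-2) ≤ Real.log (j:ℝ) := Real.log_le_log (by linarith) hjx2
    have : (x-2) * Real.log (x-2) ≤ (j:ℝ) * Real.log j := by
      calc (x-2) * Real.log (x-2) ≤ (j:ℝ) * Real.log (x-2) :=
            mul_le_mul_of_nonneg_right hjx2 hla
      _ ≤ (j:ℝ) * Real.log j := mul_le_mul_of_nonneg_left hlj hjpos.le
    linarith
  have h5 : x * Real.log x - 2 * Real.log x - 2 ≤ (x-2) * Real.log (x-2) := by
    have hxa : Real.log x - Real.log (x-2) ≤ 2/(x-2) := by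
      rw [← Real.log_div hx0.ne' (by linarith)]
      calc Real.log (x/(x-2)) ≤ x/(x-2) - 1 := Real.log_le_sub_one_of_pos (by positivity)
      _ = 2/(x-2) := by field_simp; ring
    have := mul_le_mul_of_nonneg_left hxa (by linarith : (0:ℝ) ≤ x - 2)
    have hxx : (x-2) * (2/(x-2)) = 2 := by field_simp
    nlinarith [hlogx]
  calc x * Real.log x - x - 2 * Real.log x - 2
      = (x * Real.log x - 2 * Real.log x - 2) - (x - 2) - 2 := by ring
  _ ≤ (x-2) * Real.log (x-2) - (x-2) - 2 := by linarith
  _ ≤ (j:ℝ) * Real.log j - ((j:ℝ) - 1) - 2 := by linarith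
  _ ≤ Real.log (j.factorial:ℝ) := by linarith
  _ ≤ Real.log (Real.Gamma x) := h2

/-! ### The normalisation constant -/

lemma gammaRatio_lower {n : ℕ} {θ γ : ℝ} {p : Fin n → ℝ} (hθ : 0 < θ) (hγ : 0 < γ)
    (hp : ∀ i, 0 < p i) (hsum : ∑ i, p i = 1)
    (h1 : 3 ≤ θ/γ) (h2 : ∀ i, 3 ≤ θ * p i / γ) :
    -θ * (∑ i, p i * Real.log (p i))
      - (γ * (2 * Real.log (θ/γ) + 2) + ∑ i, γ * (2 * Real.log (θ * p i/γ) + 2))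
      ≤ γ * Real.log (Real.Gamma (θ/γ) / ∏ i, Real.Gamma (θ * p i / γ)) := by
  have hΓt : 0 < Real.Gamma (θ/γ) := Real.Gamma_pos_of_pos (by positivity)
  have hΓi : ∀ i, 0 < Real.Gamma (θ * p i / γ) :=
    fun i => Real.Gamma_pos_of_pos (by have := hp i; positivity)
  have hprod : 0 < ∏ i, Real.Gamma (θ * p i / γ) := Finset.prod_pos fun i _ => hΓi i
  have hlogq : Real.log (Real.Gamma (θ/γ) / ∏ i, Real.Gamma (θ * p i / γ))
      = Real.log (Real.Gamma (θ/γ)) - ∑ i, Real.log (Real.Gamma (θ * p i / γ)) := by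
    rw [Real.log_div hΓt.ne' hprod.ne', Real.log_prod (fun i _ => (hΓi i).ne')]
  have hA : θ * Real.log (θ/γ) - θ - γ * (2 * Real.log (θ/γ) + 2)
      ≤ γ * Real.log (Real.Gamma (θ/γ)) := by
    have h := mul_le_mul_of_nonneg_left (le_log_Gamma h1) hγ.le
    have e : γ * (θ/γ * Real.log (θ/γ) - θ/γ - 2 * Real.log (θ/γ) - 2)
        = θ * Real.log (θ/γ) - θ - γ * (2 * Real.log (θ/γ) + 2) := by
      field_simp; ring
    linarith [e ▸ h]
  have hB : ∀ i, γ * Real.log (Real.Gamma (θ * p i / γ))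
      ≤ θ * p i * Real.log (θ * p i/γ) - θ * p i + γ * (2 * Real.log (θ * p i/γ) + 2) := by
    intro i
    have h := mul_le_mul_of_nonneg_left (log_Gamma_le (h2 i)) hγ.le
    have e : γ * ((θ * p i/γ) * Real.log (θ * p i/γ) - θ * p i/γ + Real.log (θ * p i/γ) + 2)
        = θ * p i * Real.log (θ * p i/γ) - θ * p i + γ * (Real.log (θ * p i/γ) + 2) := by
      field_simp; ring
    have hl : 0 ≤ Real.log (θ * p i / γ) :=
      Real.log_nonneg (by linarith [h2 i])
    nlinarith [e ▸ h]
  have hBsum : γ * ∑ i, Real.log (Real.Gamma (θ * p i / γ))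
      ≤ ∑ i, (θ * p i * Real.log (θ * p i/γ) - θ * p i)
        + ∑ i, γ * (2 * Real.log (θ * p i/γ) + 2) := by
    rw [Finset.mul_sum, ← Finset.sum_add_distrib]
    apply Finset.sum_le_sum
    intro i _
    linarith [hB i]
  have hmain : θ * Real.log (θ/γ) - θ - ∑ i, (θ * p i * Real.log (θ * p i/γ) - θ * p i)
      = -θ * (∑ i, p i * Real.log (p i)) := by
    have hsplit : ∀ i, θ * p i * Real.log (θ * p i/γ) - θ * p i
        = θ * (p i * Real.log (p i)) + (Real.log θ - Real.log γ) * (θ * p i) - θ * p i := by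
      intro i
      have hpi := hp i
      have : Real.log (θ * p i / γ) = Real.log θ + Real.log (p i) - Real.log γ := by
        rw [Real.log_div (by positivity) hγ.ne', Real.log_mul hθ.ne' (hp i).ne']
      rw [this]; ring
    rw [Finset.sum_congr rfl (fun i _ => hsplit i)]
    rw [Finset.sum_sub_distrib, Finset.sum_add_distrib, ← Finset.mul_sum, ← Finset.mul_sum,
      ← Finset.mul_sum, hsum]
    rw [Real.log_div hθ.ne' hγ.ne']
    ring
  calc -θ * (∑ i, p i * Real.log (p i))
      - (γ * (2 * Real.log (θ/γ) + 2) + ∑ i, γ * (2 * Real.log (θ * p i/γ) + 2))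
      = (θ * Real.log (θ/γ) - θ - γ * (2 * Real.log (θ/γ) + 2))
        - (∑ i, (θ * p i * Real.log (θ * p i/γ) - θ * p i)
            + ∑ i, γ * (2 * Real.log (θ * p i/γ) + 2)) := by
        rw [← hmain]; ring
  _ ≤ γ * Real.log (Real.Gamma (θ/γ)) - γ * ∑ i, Real.log (Real.Gamma (θ * p i / γ)) := by
        linarith [hA, hBsum]
  _ = γ * Real.log (Real.Gamma (θ/γ) / ∏ i, Real.Gamma (θ * p i / γ)) := by
        rw [hlogq]; ring

/-! ### Simplex lemmas and the measure lower bound -/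

lemma xext_nonneg {n : ℕ} {y : Fin (n-1) → ℝ} (hy : y ∈ Sn n) (i : Fin n) :
    0 ≤ xext n y i := by
  unfold xext
  split_ifs with h
  · exact hy.1 _
  · simp only [sub_nonneg]; exact hy.2

lemma xext_le_one {n : ℕ} {y : Fin (n-1) → ℝ} (hy : y ∈ Sn n) (i : Fin n) :
    xext n y i ≤ 1 := by
  unfold xext
  split_ifs with h
  · calc y ⟨i, h⟩ ≤ ∑ j, y j := Finset.single_le_sum (fun j _ => hy.1 j) (Finset.mem_univ _)
    _ ≤ 1 := hy.2
  · have : 0 ≤ ∑ j, y j := Finset.sum_nonneg fun j _ => hy.1 j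
    linarith

lemma measurableSet_Sn (n : ℕ) : MeasurableSet (Sn n) := by
  have : Sn n = (⋂ i, {x : Fin (n-1) → ℝ | 0 ≤ x i}) ∩ {x | ∑ i, x i ≤ 1} := by
    ext x; simp [Sn, Set.mem_iInter]
  rw [this]
  refine MeasurableSet.inter (MeasurableSet.iInter fun i => ?_) ?_
  · exact measurableSet_le measurable_const (measurable_pi_apply i)
  · exact measurableSet_le (Finset.measurable_sum _ fun i _ => measurable_pi_apply i)
      measurable_const

lemma dirichlet_meas_lower (n : ℕ) (θ γ : ℝ) (p : Fin n → ℝ) (hθ : 0 < θ) (hγ : 0 < γ)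
    (hp : ∀ i, 0 < p i) (G : Set (Fin (n-1) → ℝ)) (hGmeas : MeasurableSet G)
    (B : Set (Fin (n-1) → ℝ)) (hBG : B ⊆ G) (hBS : B ⊆ Sn n) (hBmeas : MeasurableSet B)
    (c : Fin n → ℝ) (hc : ∀ i, 0 < c i) (hcB : ∀ y ∈ B, ∀ i, c i ≤ xext n y i) :
    ENNReal.ofReal ((Real.Gamma (θ/γ) / ∏ i, Real.Gamma (θ*p i/γ)) *
        (∏ i, c i ^ p i) ^ (θ/γ)) * volume B ≤ dirichletS n θ γ p G := by
  set Cγ := Real.Gamma (θ/γ) / ∏ i, Real.Gamma (θ*p i/γ) with hCγ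
  have hCγ0 : 0 < Cγ := by
    apply div_pos (Real.Gamma_pos_of_pos (by positivity))
    exact Finset.prod_pos fun i _ => Real.Gamma_pos_of_pos (by have := hp i; positivity)
  set c0 : ℝ≥0∞ := ENNReal.ofReal (Cγ * (∏ i, c i ^ p i) ^ (θ/γ)) with hc0
  have key : ∀ y, B.indicator (fun _ => c0) y ≤
      (Sn n).indicator
        (fun x => ENNReal.ofReal (Cγ * ∏ i, xext n x i ^ (θ * p i / γ - 1))) y := by
    intro y
    rcases Classical.em (y ∈ B) with hy | hy
    · rw [Set.indicator_of_mem hy, Set.indicator_of_mem (hBS hy)]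
      apply ENNReal.ofReal_le_ofReal
      apply mul_le_mul_of_nonneg_left _ hCγ0.le
      have hcy := hcB y hy
      have hy1 : ∀ i, 0 < xext n y i := fun i => lt_of_lt_of_le (hc i) (hcy i)
      calc (∏ i, c i ^ p i) ^ (θ/γ)
          = ∏ i, (c i ^ p i) ^ (θ/γ) := by
            rw [Real.finset_prod_rpow _ _ (fun i _ => Real.rpow_nonneg (hc i).le _)]
      _ = ∏ i, c i ^ (θ * p i / γ) := by
            apply Finset.prod_congr rfl
            intro i _
            rw [← Real.rpow_mul (hc i).le]
            congr 1
            field_simp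
      _ ≤ ∏ i, xext n y i ^ (θ * p i / γ - 1) := by
            apply Finset.prod_le_prod
            · intro i _; exact Real.rpow_nonneg (hc i).le _
            · intro i _
              calc c i ^ (θ * p i / γ)
                  ≤ xext n y i ^ (θ * p i / γ) := by
                    apply Real.rpow_le_rpow (hc i).le (hcy i)
                    have := hp i; positivity
              _ ≤ xext n y i ^ (θ * p i / γ - 1) := by
                    apply Real.rpow_le_rpow_of_exponent_ge (hy1 i) (xext_le_one (hBS hy) i)
                    linarith
    · rw [Set.indicator_of_notMem hy]
      exact zero_le
  calc c0 * volume B = ∫⁻ y in G, B.indicator (fun _ => c0) y := by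
        rw [lintegral_indicator hBmeas, setLIntegral_const]
        rw [Measure.restrict_apply hBmeas, Set.inter_eq_self_of_subset_left hBG]
  _ ≤ ∫⁻ y in G, (Sn n).indicator
        (fun x => ENNReal.ofReal (Cγ * ∏ i, xext n x i ^ (θ * p i / γ - 1))) y :=
      lintegral_mono key
  _ = dirichletS n θ γ p G := by
      rw [dirichletS, withDensity_apply _ hGmeas]

/-! ### EReal helper lemmas -/

lemma ereal_coe_sum {ι : Type*} (s : Finset ι) (f : ι → ℝ) :
    ((∑ i ∈ s, f i : ℝ) : EReal) = ∑ i ∈ s, (f i : EReal) := by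
  induction s using Finset.cons_induction with
  | empty => simp
  | cons a s ha ih => rw [Finset.sum_cons, Finset.sum_cons, EReal.coe_add, ih]

lemma ereal_sum_ne_bot {ι : Type*} {s : Finset ι} {f : ι → EReal}
    (h : ∀ j ∈ s, f j ≠ ⊥) : ∑ j ∈ s, f j ≠ ⊥ := by
  induction s using Finset.cons_induction with
  | empty => simp
  | cons a s ha ih =>
    rw [Finset.sum_cons, Ne, EReal.add_eq_bot_iff]
    push_neg
    exact ⟨h a (Finset.mem_cons_self _ _), ih fun j hj => h j (Finset.mem_cons_of_mem hj)⟩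

lemma ereal_sum_eq_top {ι : Type*} {s : Finset ι} {f : ι → EReal}
    (h : ∀ j ∈ s, f j ≠ ⊥) {i : ι} (hi : i ∈ s) (hf : f i = ⊤) : ∑ j ∈ s, f j = ⊤ := by
  classical
  rw [← Finset.add_sum_erase s f hi, hf]
  exact EReal.top_add_of_ne_bot
    (ereal_sum_ne_bot fun j hj => h j (Finset.mem_of_mem_erase hj))

lemma ereal_lt_div_of_mul_lt {θ c : ℝ} (hθ : 0 < θ) {I : EReal}
    (h : (θ:EReal) * I < (c:EReal)) : I < ((c/θ : ℝ) : EReal) := by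
  induction I using EReal.rec with
  | bot => exact EReal.bot_lt_coe _
  | coe a =>
    rw [← EReal.coe_mul, EReal.coe_lt_coe_iff] at h
    rw [EReal.coe_lt_coe_iff, lt_div_iff₀ hθ]
    linarith
  | top =>
    rw [EReal.coe_mul_top_of_pos hθ] at h
    exact absurd h (not_top_lt)

lemma err_tendsto (n : ℕ) (θ v : ℝ) (hθ : 0 < θ) (p : Fin n → ℝ) (hp : ∀ i, 0 < p i) :
    Tendsto (fun γ : ℝ => γ * (2 * Real.log (θ/γ) + 2)
      + ∑ i, γ * (2 * Real.log (θ * p i/γ) + 2) - γ * Real.log v)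
      (nhdsWithin 0 (Set.Ioi 0)) (nhds 0) := by
  have hxlogx : Tendsto (fun γ : ℝ => γ * Real.log γ) (nhdsWithin 0 (Set.Ioi 0)) (nhds 0) := by
    have h := (Real.continuous_mul_log.tendsto 0).mono_left
      (nhdsWithin_le_nhds (s := Set.Ioi (0:ℝ)))
    simpa using h
  have hid : Tendsto (fun γ : ℝ => γ) (nhdsWithin 0 (Set.Ioi 0)) (nhds 0) := by
    exact tendsto_id.mono_left nhdsWithin_le_nhds
  have hE : Tendsto (fun γ : ℝ =>
      (2 * (γ * Real.log θ) - 2 * (γ * Real.log γ) + 2 * γ)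
        + ∑ i, (2 * (γ * Real.log (θ * p i)) - 2 * (γ * Real.log γ) + 2 * γ)
        - γ * Real.log v) (nhdsWithin 0 (Set.Ioi 0)) (nhds 0) := by
    have t1 : Tendsto (fun γ : ℝ => 2 * (γ * Real.log θ) - 2 * (γ * Real.log γ) + 2 * γ)
        (nhdsWithin 0 (Set.Ioi 0)) (nhds 0) := by
      have := (((hid.mul_const (Real.log θ)).const_mul 2).sub
        (hxlogx.const_mul 2)).add (hid.const_mul 2)
      simpa using this
    have t2 : Tendsto (fun γ : ℝ =>
        ∑ i : Fin n, (2 * (γ * Real.log (θ * p i)) - 2 * (γ * Real.log γ) + 2 * γ))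
        (nhdsWithin 0 (Set.Ioi 0)) (nhds 0) := by
      have := tendsto_finset_sum (Finset.univ : Finset (Fin n))
        (fun i _ => (((hid.mul_const (Real.log (θ * p i))).const_mul 2).sub
          (hxlogx.const_mul 2)).add (hid.const_mul 2))
      simpa using this
    have t3 : Tendsto (fun γ : ℝ => γ * Real.log v)
        (nhdsWithin 0 (Set.Ioi 0)) (nhds 0) := by
      have := hid.mul_const (Real.log v)
      simpa using this
    have := (t1.add t2).sub t3
    simpa using this
  apply hE.congr'
  filter_upwards [self_mem_nhdsWithin] with γ hγ
  have hγ0 : (0:ℝ) < γ := hγ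
  have e1 : Real.log (θ/γ) = Real.log θ - Real.log γ := Real.log_div hθ.ne' hγ0.ne'
  have e2 : ∀ i, Real.log (θ * p i/γ) = Real.log (θ * p i) - Real.log γ := by
    intro i
    have := hp i
    exact Real.log_div (by positivity) hγ0.ne'
  have hsum1 : ∑ i, γ * (2 * Real.log (θ * p i/γ) + 2)
      = ∑ i, (2 * (γ * Real.log (θ * p i)) - 2 * (γ * Real.log γ) + 2 * γ) :=
    Finset.sum_congr rfl (fun i _ => by rw [e2 i]; ring)
  rw [e1, hsum1]
  ring


/-! ### The main theorem -/

set_option maxHeartbeats 2000000 in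
/-- the large deviation lower bound for relatively open subsets of `S_n`
of `S_n` for the Dirichlet distributions `Π_{θ,γ,p}` as `γ → 0⁺`, with rate function
`θ ∑ pᵢ log(pᵢ/xᵢ)` (the infimum over the empty set being `+∞`). -/
theorem dirichlet_LDP_lower (n : ℕ) (hn : 2 ≤ n) (θ : ℝ) (hθ : 0 < θ)
    (p : Fin n → ℝ) (hp : ∀ i, 0 < p i) (hsum : ∑ i, p i = 1)
    (G : Set (Fin (n - 1) → ℝ)) (hG : ∃ U, IsOpen U ∧ G = U ∩ Sn n) :
    -((θ : EReal) * ⨅ x ∈ G, entCost n p x) ≤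
      liminf (fun γ : ℝ => (γ : EReal) * ENNReal.log (dirichletS n θ γ p G))
        (nhdsWithin 0 (Set.Ioi 0)) := by
  obtain ⟨U, hU, hGeq⟩ := hG
  by_contra hcon
  push_neg at hcon
  obtain ⟨r, hr1, hr2⟩ := EReal.exists_between_coe_real hcon
  -- From `hr2` extract a good point `x ∈ G`.
  rw [EReal.lt_neg_comm] at hr2
  rw [show -(r:EReal) = (((-r : ℝ)):EReal) by rw [EReal.coe_neg]] at hr2
  have hI : (⨅ x ∈ G, entCost n p x) < (((-r)/θ : ℝ) : EReal) :=
    ereal_lt_div_of_mul_lt hθ hr2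
  rw [iInf_lt_iff] at hI
  obtain ⟨x, hI⟩ := hI
  rw [iInf_lt_iff] at hI
  obtain ⟨hxG, hent⟩ := hI
  have hxSn : x ∈ Sn n := by rw [hGeq] at hxG; exact hxG.2
  have hxU : x ∈ U := by rw [hGeq] at hxG; exact hxG.1
  -- All extended coordinates of `x` are positive.
  have hxpos : ∀ i, 0 < xext n x i := by
    intro i
    rcases lt_or_eq_of_le (xext_nonneg hxSn i) with h | h
    · exact h
    · exfalso
      have htop : entCost n p x = ⊤ := by
        apply ereal_sum_eq_top (f := fun i => if xext n x i = 0 then (⊤ : EReal)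
          else ((p i * Real.log (p i / xext n x i) : ℝ) : EReal)) (i := i)
        · intro j _
          split_ifs
          · exact top_ne_bot
          · exact EReal.coe_ne_bot _
        · exact Finset.mem_univ i
        · rw [if_pos h.symm]
      rw [entCost] at hent
      rw [entCost] at htop
      rw [htop] at hent
      exact absurd hent not_top_lt
  -- `entCost` at `x` is a real number.
  set cx : ℝ := ∑ i, p i * Real.log (p i / xext n x i) with hcx
  have hentx : entCost n p x = (cx : EReal) := by
    rw [entCost, hcx, ereal_coe_sum]
    apply Finset.sum_congr rfl
    intro i _
    rw [if_neg (hxpos i).ne']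
  rw [hentx, EReal.coe_lt_coe_iff] at hent
  have hrcx : r < -(θ * cx) := by
    rw [lt_div_iff₀ hθ] at hent
    linarith
  set ε : ℝ := -(θ * cx) - r with hε
  have hε0 : 0 < ε := by rw [hε]; linarith
  -- Geometric setup.
  have hn0 : 0 < n := by omega
  have hFinNe : (Finset.univ : Finset (Fin n)).Nonempty := ⟨⟨0, hn0⟩, Finset.mem_univ _⟩
  set κ : ℝ := Real.exp (-(ε/(2*θ))) with hκ
  have hκ0 : 0 < κ := Real.exp_pos _
  have hκ1 : κ < 1 := by
    rw [hκ]
    apply Real.exp_lt_one_iff.mpr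
    have : (0:ℝ) < ε/(2*θ) := div_pos hε0 (by linarith)
    linarith
  set m : ℝ := Finset.univ.inf' hFinNe (fun i => xext n x i) with hm
  have hm0 : 0 < m := by
    rw [hm, Finset.lt_inf'_iff]
    exact fun i _ => hxpos i
  have hmle : ∀ i, m ≤ xext n x i := fun i => Finset.inf'_le _ (Finset.mem_univ i)
  set c : Fin n → ℝ := fun i => κ * xext n x i with hc
  have hc0 : ∀ i, 0 < c i := fun i => mul_pos hκ0 (hxpos i)
  obtain ⟨δ₀, hδ₀0, hδ₀U⟩ := Metric.isOpen_iff.mp hU x hxU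
  set δ : ℝ := min δ₀ ((1-κ) * m / n) with hδ
  have hδ0 : 0 < δ := by
    apply lt_min hδ₀0
    have : 0 < (1-κ) * m := mul_pos (by linarith) hm0
    positivity
  have hδm : (n:ℝ) * δ ≤ (1-κ) * m := by
    have h1 : δ ≤ (1-κ) * m / n := min_le_right _ _
    have h2 : (0:ℝ) < n := by exact_mod_cast hn0
    rw [le_div_iff₀ h2] at h1
    linarith [h1]
  have hδ1 : δ ≤ (1-κ) * m := by
    have h2 : (1:ℝ) ≤ n := by exact_mod_cast hn0
    nlinarith [hδ0.le]
  have hδn1 : ((n:ℝ)-1) * δ ≤ (1-κ) * m := by nlinarith [hδ0.le]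
  set B : Set (Fin (n-1) → ℝ) := Metric.ball x δ with hB
  -- Coordinates on the ball.
  have hcB : ∀ y ∈ B, ∀ i, c i ≤ xext n y i := by
    intro y hy i
    have hdist : dist y x < δ := Metric.mem_ball.mp hy
    have hco : ∀ j : Fin (n-1), |y j - x j| < δ := by
      intro j
      calc |y j - x j| = dist (y j) (x j) := by rw [Real.dist_eq]
      _ ≤ dist y x := dist_le_pi_dist y x j
      _ < δ := hdist
    have hsumd : |∑ j, y j - ∑ j, x j| ≤ ((n:ℝ)-1) * δ := by
      rw [← Finset.sum_sub_distrib]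
      calc |∑ j, (y j - x j)| ≤ ∑ j, |y j - x j| := Finset.abs_sum_le_sum_abs _ _
      _ ≤ (Finset.univ : Finset (Fin (n-1))).card • δ :=
          Finset.sum_le_card_nsmul _ _ δ (fun j _ => (hco j).le)
      _ = ((n-1:ℕ):ℝ) * δ := by
          rw [Finset.card_univ, Fintype.card_fin, nsmul_eq_mul]
      _ = ((n:ℝ)-1) * δ := by
          congr 1
          have : ((n-1:ℕ):ℝ) = (n:ℝ) - 1 := by
            have : 1 ≤ n := by omega
            push_cast [this]
            ring
          rw [this]
    show c i ≤ xext n y i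
    unfold xext
    split_ifs with h
    · have hxx : xext n x i = x ⟨i, h⟩ := by unfold xext; rw [dif_pos h]
      have hm' : m ≤ x ⟨i, h⟩ := hxx ▸ hmle i
      have habs := abs_lt.mp (hco ⟨i, h⟩)
      have : c i = κ * x ⟨i, h⟩ := by simp only [hc]; rw [hxx]
      rw [this]
      nlinarith [habs.1, hδ1]
    · have hxx : xext n x i = 1 - ∑ j, x j := by unfold xext; rw [dif_neg h]
      have hm' : m ≤ 1 - ∑ j, x j := hxx ▸ hmle i
      have habs := abs_le.mp hsumd
      have : c i = κ * (1 - ∑ j, x j) := by simp only [hc]; rw [hxx]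
      rw [this]
      nlinarith [habs.2, hδn1]
  -- The ball is inside the simplex and inside `G`.
  have hBS : B ⊆ Sn n := by
    intro y hy
    constructor
    · intro j
      have hj : ((⟨(j:ℕ), by omega⟩ : Fin n) : ℕ) < n - 1 := j.isLt
      have h1 := hcB y hy ⟨(j:ℕ), by omega⟩
      have h2 : xext n y ⟨(j:ℕ), by omega⟩ = y j := by
        unfold xext
        rw [dif_pos hj]
      rw [h2] at h1
      exact le_trans (hc0 _).le h1
    · have hlast : ¬ (((⟨n-1, by omega⟩ : Fin n)) : ℕ) < n - 1 := by simp
      have h1 := hcB y hy ⟨n-1, by omega⟩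
      have h2 : xext n y ⟨n-1, by omega⟩ = 1 - ∑ j, y j := by
        unfold xext
        rw [dif_neg hlast]
      rw [h2] at h1
      have := (hc0 ⟨n-1, by omega⟩)
      linarith
  have hBG : B ⊆ G := by
    intro y hy
    rw [hGeq]
    exact ⟨hδ₀U (Metric.ball_subset_ball (min_le_left _ _) hy), hBS hy⟩
  have hGmeas : MeasurableSet G := by
    rw [hGeq]; exact hU.measurableSet.inter (measurableSet_Sn n)
  have hBmeas : MeasurableSet B := Metric.isOpen_ball.measurableSet
  -- Volume of the ball.
  set v : ℝ := (volume B).toReal with hv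
  have hvpos : 0 < v := by
    rw [hv]
    apply ENNReal.toReal_pos
    · exact (Metric.measure_ball_pos _ _ hδ0).ne'
    · exact measure_ball_lt_top.ne
  have hvB : volume B = ENNReal.ofReal v := by
    rw [hv, ENNReal.ofReal_toReal measure_ball_lt_top.ne]
  -- `M` and its logarithm.
  set M : ℝ := ∏ i, c i ^ p i with hM
  have hM0 : 0 < M := Finset.prod_pos fun i _ => Real.rpow_pos_of_pos (hc0 i) _
  set L : ℝ := ∑ i, p i * Real.log (xext n x i) with hL
  set S : ℝ := ∑ i, p i * Real.log (p i) with hS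
  have hlogM : θ * Real.log M = -(ε/2) + θ * L := by
    rw [hM, Real.log_prod (fun i _ => (Real.rpow_pos_of_pos (hc0 i) _).ne')]
    have : ∀ i, Real.log (c i ^ p i) = p i * (Real.log κ + Real.log (xext n x i)) := by
      intro i
      rw [Real.log_rpow (hc0 i), hc, Real.log_mul hκ0.ne' (hxpos i).ne']
    rw [Finset.sum_congr rfl (fun i _ => this i)]
    have hκlog : Real.log κ = -(ε/(2*θ)) := by rw [hκ, Real.log_exp]
    have : ∑ i, p i * (Real.log κ + Real.log (xext n x i))
        = (∑ i, p i) * Real.log κ + L := by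
      rw [hL, Finset.sum_mul, ← Finset.sum_add_distrib]
      apply Finset.sum_congr rfl
      intro i _
      ring
    rw [this, hsum, hκlog]
    field_simp
  have hcxSL : cx = S - L := by
    rw [hcx, hS, hL, ← Finset.sum_sub_distrib]
    apply Finset.sum_congr rfl
    intro i _
    rw [Real.log_div (hp i).ne' (hxpos i).ne']
    ring
  -- The error term tends to zero.
  set pm : ℝ := Finset.univ.inf' hFinNe p with hpm
  have hpm0 : 0 < pm := by rw [hpm, Finset.lt_inf'_iff]; exact fun i _ => hp i
  have hpmle : ∀ i, pm ≤ p i := fun i => Finset.inf'_le _ (Finset.mem_univ i)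
  set γ₀ : ℝ := min (θ/3) (θ * pm / 3) with hγ₀
  have hγ₀0 : 0 < γ₀ := by
    apply lt_min (by positivity)
    positivity
  -- Eventually, the liminf function is at least `r`.
  have hev : ∀ᶠ γ : ℝ in nhdsWithin (0:ℝ) (Set.Ioi 0),
      (r : EReal) ≤ (γ : EReal) * ENNReal.log (dirichletS n θ γ p G) := by
    have hIoo : Set.Ioo (0:ℝ) γ₀ ∈ nhdsWithin (0:ℝ) (Set.Ioi 0) :=
      Ioo_mem_nhdsGT_of_mem ⟨le_refl 0, hγ₀0⟩
    have herrev : ∀ᶠ γ in nhdsWithin (0:ℝ) (Set.Ioi 0),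
        γ * (2 * Real.log (θ/γ) + 2) + ∑ i, γ * (2 * Real.log (θ * p i/γ) + 2)
          - γ * Real.log v < ε/2 :=
      (err_tendsto n θ v hθ p hp).eventually_lt_const (by positivity)
    filter_upwards [hIoo, herrev] with γ hγIoo herrγ
    obtain ⟨hγ0, hγγ₀⟩ := hγIoo
    have hγθ : 3 ≤ θ/γ := by
      have h1 : γ < θ/3 := lt_of_lt_of_le hγγ₀ (min_le_left _ _)
      rw [le_div_iff₀ hγ0]
      linarith
    have hγpi : ∀ i, 3 ≤ θ * p i / γ := by
      intro i
      have h1 : γ < θ * pm/3 := lt_of_lt_of_le hγγ₀ (min_le_right _ _)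
      have h2 : θ * pm ≤ θ * p i := mul_le_mul_of_nonneg_left (hpmle i) hθ.le
      rw [le_div_iff₀ hγ0]
      linarith
    set Cγ : ℝ := Real.Gamma (θ/γ) / ∏ i, Real.Gamma (θ*p i/γ) with hCγdef
    have hCγ0 : 0 < Cγ := by
      apply div_pos (Real.Gamma_pos_of_pos (by positivity))
      exact Finset.prod_pos fun i _ => Real.Gamma_pos_of_pos (by have := hp i; positivity)
    set K : ℝ := Cγ * M ^ (θ/γ) with hK
    have hK0 : 0 < K := mul_pos hCγ0 (Real.rpow_pos_of_pos hM0 _)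
    -- measure bound
    have hmeas := dirichlet_meas_lower n θ γ p hθ hγ0 hp G hGmeas B hBG hBS hBmeas c hc0 hcB
    have hmeas' : ENNReal.ofReal (K * v) ≤ dirichletS n θ γ p G := by
      calc ENNReal.ofReal (K * v) = ENNReal.ofReal K * ENNReal.ofReal v :=
            ENNReal.ofReal_mul hK0.le
      _ = ENNReal.ofReal K * volume B := by rw [hvB]
      _ ≤ dirichletS n θ γ p G := by
          rw [hK, hM]
          exact hmeas
    have hlog : ((Real.log (K * v) : ℝ) : EReal) ≤ ENNReal.log (dirichletS n θ γ p G) := by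
      calc ((Real.log (K * v) : ℝ) : EReal)
          = ENNReal.log (ENNReal.ofReal (K * v)) := by
            rw [ENNReal.log_ofReal_of_pos (by positivity)]
      _ ≤ ENNReal.log (dirichletS n θ γ p G) := ENNReal.log_monotone hmeas'
    have hmul : ((γ * Real.log (K * v) : ℝ) : EReal)
        ≤ (γ : EReal) * ENNReal.log (dirichletS n θ γ p G) := by
      rw [EReal.coe_mul]
      exact mul_le_mul_of_nonneg_left hlog (by exact_mod_cast hγ0.le)
    -- real estimate
    have hreal : r ≤ γ * Real.log (K * v) := by
      have hexp : γ * Real.log (K * v)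
          = γ * Real.log Cγ + θ * Real.log M + γ * Real.log v := by
        rw [Real.log_mul hK0.ne' hvpos.ne', hK,
          Real.log_mul hCγ0.ne' (Real.rpow_pos_of_pos hM0 _).ne',
          Real.log_rpow hM0]
        field_simp
      have hgam := gammaRatio_lower (n := n) (θ := θ) (γ := γ) (p := p)
        hθ hγ0 hp hsum hγθ hγpi
      rw [hexp]
      have herrγ' : γ * (2 * Real.log (θ/γ) + 2) + ∑ i, γ * (2 * Real.log (θ * p i/γ) + 2)
          - γ * Real.log v < ε/2 := herrγ
      have : -θ * S - (γ * (2 * Real.log (θ/γ) + 2)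
          + ∑ i, γ * (2 * Real.log (θ * p i/γ) + 2)) ≤ γ * Real.log Cγ := hgam
      have hr' : r = -(θ * cx) - ε := by rw [hε]; ring
      rw [hr', hcxSL]
      linarith [hlogM]
    calc (r : EReal) ≤ ((γ * Real.log (K * v) : ℝ) : EReal) := by
          exact_mod_cast hreal
    _ ≤ (γ : EReal) * ENNReal.log (dirichletS n θ γ p G) := hmul
  have hliminf : (r : EReal) ≤ liminf (fun γ : ℝ =>
      (γ : EReal) * ENNReal.log (dirichletS n θ γ p G)) (nhdsWithin 0 (Set.Ioi 0)) :=
    le_liminf_of_le (by isBoundedDefault) hev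
  exact absurd hliminf (not_le.mpr hr1)
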